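/- Let n ≥ 2 and let M be a nonempty subset of Fin n with t = |M| and t < n. In EuclideanSpace ℂ (Fin n), define the marked and unmarked uniform superpositions a = (1/√t) Σ_{i∈M} e_i and b = (1/√(n−t)) Σ_{i∉M} e_i, the oracle O acting by (O x)_i = −x_i if i ∈ M and (O x)_i = x_i otherwise, the uniform superposition Ψ = (1/√n) Σ_{i} e_i, the reflection R x = 2⟪Ψ, x⟫ Ψ − x, and the Grover operator G = R ∘ O. Let θ = arcsin √(t/n). Then Ψ = cos θ • b + sin θ • a, and for every real φ, G (cos φ • b + sin φ • a) = cos(φ + 2θ) • b + sin(φ + 2θ) • a; that is, G acts on the plane spanned by a and b as a rotation by angle 2θ. -/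

import Mathlib

/-- The Grover operator acts on the plane spanned by the marked and unmarked
uniform superpositions as a rotation by angle `2θ`, where `θ = arcsin √(t/n)`. -/
theorem grover_rotation (n : ℕ) (hn : 2 ≤ n) (M : Finset (Fin n)) (hM : M.Nonempty)
    (t : ℕ) (ht : t = M.card) (htn : t < n)
    (a b Ψ : EuclideanSpace ℂ (Fin n))
    (ha : ∀ i, a i = if i ∈ M then ((Real.sqrt t)⁻¹ : ℂ) else 0)
    (hb : ∀ i, b i = if i ∈ M then 0 else ((Real.sqrt ((n : ℝ) - t))⁻¹ : ℂ))
    (hΨ : ∀ i, Ψ i = ((Real.sqrt n)⁻¹ : ℂ))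
    (O R G : EuclideanSpace ℂ (Fin n) → EuclideanSpace ℂ (Fin n))
    (hO : ∀ x, ∀ i, O x i = if i ∈ M then -x i else x i)
    (hR : ∀ x, R x = (2 * (inner ℂ Ψ x : ℂ)) • Ψ - x)
    (hG : ∀ x, G x = R (O x))
    (θ : ℝ) (hθ : θ = Real.arcsin (Real.sqrt ((t : ℝ) / n))) :
    Ψ = Real.cos θ • b + Real.sin θ • a ∧
    ∀ φ : ℝ, G (Real.cos φ • b + Real.sin φ • a) =
      Real.cos (φ + 2 * θ) • b + Real.sin (φ + 2 * θ) • a := by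
  have ht1 : 1 ≤ t := ht ▸ Finset.card_pos.mpr hM
  have htr : (0:ℝ) < t := by exact_mod_cast ht1
  have hnr : (0:ℝ) < n := by positivity
  have htnr : (t:ℝ) < n := by exact_mod_cast htn
  have hntr : (0:ℝ) < (n:ℝ) - t := by linarith
  have hsn : (0:ℝ) < Real.sqrt n := Real.sqrt_pos.mpr hnr
  have hst : (0:ℝ) < Real.sqrt t := Real.sqrt_pos.mpr htr
  have hsnt : (0:ℝ) < Real.sqrt ((n:ℝ) - t) := Real.sqrt_pos.mpr hntr
  have h3 : Real.sqrt n * Real.sqrt n = n := Real.mul_self_sqrt hnr.le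
  have h1 : Real.sqrt t * Real.sqrt t = t := Real.mul_self_sqrt htr.le
  have h2 : Real.sqrt ((n:ℝ) - t) * Real.sqrt ((n:ℝ) - t) = (n:ℝ) - t :=
    Real.mul_self_sqrt hntr.le
  have hs : Real.sin θ * Real.sqrt n = Real.sqrt t := by
    rw [hθ, Real.sin_arcsin (le_trans (by norm_num) (Real.sqrt_nonneg _))
      (Real.sqrt_le_one.mpr (by rw [div_le_one hnr]; linarith)),
      Real.sqrt_div htr.le, div_mul_cancel₀ _ hsn.ne']
  have hc : Real.cos θ * Real.sqrt n = Real.sqrt ((n:ℝ) - t) := by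
    rw [hθ, Real.cos_arcsin, Real.sq_sqrt (by positivity),
      show 1 - (t:ℝ)/n = ((n:ℝ) - t)/n by field_simp,
      Real.sqrt_div hntr.le, div_mul_cancel₀ _ hsn.ne']
  have hs0 : 0 < Real.sin θ := by
    have : Real.sin θ = Real.sqrt t / Real.sqrt n := by
      rw [← hs]; field_simp
    rw [this]; positivity
  have hc0 : 0 < Real.cos θ := by
    have : Real.cos θ = Real.sqrt ((n:ℝ) - t) / Real.sqrt n := by
      rw [← hc]; field_simp
    rw [this]; positivity
  have htq : (t:ℝ) = Real.sin θ ^ 2 * (Real.sqrt n * Real.sqrt n) := by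
    have h := congrArg (· ^ 2) hs
    simp only [mul_pow] at h
    rw [Real.sq_sqrt htr.le, Real.sq_sqrt hnr.le] at h
    rw [← h, h3]
  have hntq : (n:ℝ) - t = Real.cos θ ^ 2 * (Real.sqrt n * Real.sqrt n) := by
    have h := congrArg (· ^ 2) hc
    simp only [mul_pow] at h
    rw [Real.sq_sqrt hntr.le, Real.sq_sqrt hnr.le] at h
    rw [← h, h3]
  have pyth := Real.sin_sq_add_cos_sq θ
  constructor
  · ext i
    simp only [PiLp.add_apply, PiLp.smul_apply, hΨ, ha, hb, Complex.real_smul]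
    by_cases hi : i ∈ M <;> simp [hi]
    · have : Real.sin θ * (Real.sqrt t)⁻¹ = (Real.sqrt n)⁻¹ := by
        field_simp
        linarith [hs]
      exact_mod_cast this.symm
    · have : Real.cos θ * (Real.sqrt ((n:ℝ) - t))⁻¹ = (Real.sqrt n)⁻¹ := by
        field_simp
        linarith [hc]
      exact_mod_cast this.symm
  · intro φ
    set x : EuclideanSpace ℂ (Fin n) := Real.cos φ • b + Real.sin φ • a with hx
    have hOx : ∀ i, O x i =
        if i ∈ M then (-(Real.sin φ) * (Real.sqrt t)⁻¹ : ℂ)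
        else ((Real.cos φ) * (Real.sqrt ((n:ℝ) - t))⁻¹ : ℂ) := by
      intro i
      rw [hO]
      by_cases hi : i ∈ M <;>
        simp [hi, hx, PiLp.add_apply, PiLp.smul_apply, ha, hb, Complex.real_smul] <;>
        push_cast <;> ring
    have key : (Real.sqrt n)⁻¹ * ((t:ℝ) * (-(Real.sin φ) * (Real.sqrt t)⁻¹)
        + ((n:ℝ) - t) * (Real.cos φ * (Real.sqrt ((n:ℝ) - t))⁻¹)) = Real.cos (φ + θ) := by
      rw [Real.cos_add, ← hs, ← hc, hntq, htq]
      field_simp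
      linear_combination
    have hin : (inner ℂ Ψ (O x) : ℂ) = ((Real.cos (φ + θ) : ℝ) : ℂ) := by
      have he : (inner ℂ Ψ (O x) : ℂ) = ∑ i, (starRingEnd ℂ) (Ψ i) * (O x i) := by
        simp [PiLp.inner_apply, RCLike.inner_apply, mul_comm]
      rw [he]
      have hconj : ∀ i : Fin n, (starRingEnd ℂ) (Ψ i) = (((Real.sqrt n)⁻¹ : ℝ) : ℂ) := by
        intro i; rw [hΨ]; simp
      calc ∑ i, (starRingEnd ℂ) (Ψ i) * (O x i)
          = ∑ _i ∈ M, (((Real.sqrt n)⁻¹ : ℝ) : ℂ) * (-(Real.sin φ) * (Real.sqrt t)⁻¹ : ℂ)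
            + ∑ _i ∈ Mᶜ, (((Real.sqrt n)⁻¹ : ℝ) : ℂ) * ((Real.cos φ) * (Real.sqrt ((n:ℝ) - t))⁻¹ : ℂ) := by
            rw [← Finset.sum_add_sum_compl M]
            congr 1
            · exact Finset.sum_congr rfl fun i hi => by rw [hconj, hOx, if_pos hi]
            · exact Finset.sum_congr rfl fun i hi => by
                rw [hconj, hOx, if_neg (Finset.mem_compl.mp hi)]
        _ = ((Real.cos (φ + θ) : ℝ) : ℂ) := by
            rw [Finset.sum_const, Finset.sum_const, Finset.card_compl, Fintype.card_fin, ← ht]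
            have hcard : ((n - t : ℕ) : ℂ) = ((n : ℂ) - t) := by
              push_cast [Nat.cast_sub htn.le]; ring
            rw [nsmul_eq_mul, nsmul_eq_mul, hcard]
            have keyC := congrArg (Complex.ofReal) key
            push_cast at keyC ⊢
            linear_combination keyC
    have trigS : Real.sin (φ + 2*θ) = 2 * Real.cos (φ + θ) * Real.sin θ + Real.sin φ := by
      rw [show φ + 2*θ = (φ+θ)+θ by ring]
      simp only [Real.sin_add, Real.cos_add]
      linear_combination Real.sin φ * pyth
    have trigC : Real.cos (φ + 2*θ) = 2 * Real.cos (φ + θ) * Real.cos θ - Real.cos φ := by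
      rw [show φ + 2*θ = (φ+θ)+θ by ring]
      simp only [Real.sin_add, Real.cos_add]
      linear_combination (-Real.cos φ) * pyth
    have key1 : 2 * Real.cos (φ + θ) * (Real.sqrt n)⁻¹ + Real.sin φ * (Real.sqrt t)⁻¹
        = Real.sin (φ + 2*θ) * (Real.sqrt t)⁻¹ := by
      rw [trigS, ← hs]
      field_simp
    have key2 : 2 * Real.cos (φ + θ) * (Real.sqrt n)⁻¹ - Real.cos φ * (Real.sqrt ((n:ℝ)-t))⁻¹
        = Real.cos (φ + 2*θ) * (Real.sqrt ((n:ℝ)-t))⁻¹ := by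
      rw [trigC, ← hc]
      field_simp
    rw [hG, hR, hin]
    ext i
    simp only [PiLp.sub_apply, PiLp.smul_apply, PiLp.add_apply, smul_eq_mul,
      Complex.real_smul, hΨ, hOx i, ha i, hb i]
    by_cases hi : i ∈ M
    · rw [if_pos hi, if_pos hi, if_pos hi]
      have keyC := congrArg (Complex.ofReal) key1
      push_cast at keyC ⊢
      linear_combination keyC
    · rw [if_neg hi, if_neg hi, if_neg hi]
      have keyC := congrArg (Complex.ofReal) key2
      push_cast at keyC ⊢
      linear_combination keyC
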